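/- (Lemma: slackness varies slowly in the John local norm) Let x, y be in the interior of K and let w be a positive vector satisfying the John fixed-point equations at x, defining J_x = Σ_{i=1}^m w_i a_i a_i^⊤ / s_{x,i}². Then max_{i∈[m]} |1 − s_{y,i}/s_{x,i}| ≤ 2 ‖x − y‖_{J_x}, where ‖v‖_{J_x} = (v^⊤ J_x v)^{1/2}. -/

import Mathlib

open Matrix MeasureTheory Real Set
open scoped ENNReal

noncomputable section

namespace PolytopeWalks

/-- Slackness `s_{x,i} = b_i − a_i^⊤ x`. -/
def slack {d m : ℕ} (A : Matrix (Fin m) (Fin d) ℝ) (b : Fin m → ℝ) (x : Fin d → ℝ)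
    (i : Fin m) : ℝ :=
  b i - A.mulVec x i

/-- The polytope `K = {x : A x ≤ b}`. -/
def poly {d m : ℕ} (A : Matrix (Fin m) (Fin d) ℝ) (b : Fin m → ℝ) : Set (Fin d → ℝ) :=
  {x | ∀ i, A.mulVec x i ≤ b i}

/-- The interior of the polytope: all slacks positive. -/
def interiorPoly {d m : ℕ} (A : Matrix (Fin m) (Fin d) ℝ) (b : Fin m → ℝ) :
    Set (Fin d → ℝ) :=
  {x | ∀ i, 0 < slack A b x i}

/-- Hessian of the logarithmic barrier, `∇²F_x = Σ_i a_i a_i^⊤ / s_{x,i}²`. -/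
def logHess {d m : ℕ} (A : Matrix (Fin m) (Fin d) ℝ) (b : Fin m → ℝ) (x : Fin d → ℝ) :
    Matrix (Fin d) (Fin d) ℝ :=
  ∑ i : Fin m, ((slack A b x i) ^ 2)⁻¹ • vecMulVec (A i) (A i)

/-- Leverage scores `σ_{x,i} = a_i^⊤ (∇²F_x)⁻¹ a_i / s_{x,i}²`. -/
def lev {d m : ℕ} (A : Matrix (Fin m) (Fin d) ℝ) (b : Fin m → ℝ) (x : Fin d → ℝ)
    (i : Fin m) : ℝ :=
  (A i) ⬝ᵥ ((logHess A b x)⁻¹ *ᵥ (A i)) / (slack A b x i) ^ 2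

/-- The Vaidya matrix `V_x = Σ_i (σ_{x,i} + d/m) a_i a_i^⊤ / s_{x,i}²`. -/
def vaidyaMat {d m : ℕ} (A : Matrix (Fin m) (Fin d) ℝ) (b : Fin m → ℝ) (x : Fin d → ℝ) :
    Matrix (Fin d) (Fin d) ℝ :=
  ∑ i : Fin m, ((lev A b x i + (d : ℝ) / m) / (slack A b x i) ^ 2) • vecMulVec (A i) (A i)

/-- Vaidya local norm `‖v‖_{V_x} = (v^⊤ V_x v)^{1/2}`. -/
def vNorm {d m : ℕ} (A : Matrix (Fin m) (Fin d) ℝ) (b : Fin m → ℝ) (x v : Fin d → ℝ) : ℝ :=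
  Real.sqrt (v ⬝ᵥ (vaidyaMat A b x *ᵥ v))

/-- Vaidya slack sensitivities `θ_{x,i} = a_i^⊤ V_x⁻¹ a_i / s_{x,i}²`. -/
def thetaV {d m : ℕ} (A : Matrix (Fin m) (Fin d) ℝ) (b : Fin m → ℝ) (x : Fin d → ℝ)
    (i : Fin m) : ℝ :=
  (A i) ⬝ᵥ ((vaidyaMat A b x)⁻¹ *ᵥ (A i)) / (slack A b x i) ^ 2

/-- Rescaled constraint matrix `A_x = S_x⁻¹ A`. -/
def Amat {d m : ℕ} (A : Matrix (Fin m) (Fin d) ℝ) (b : Fin m → ℝ) (x : Fin d → ℝ) :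
    Matrix (Fin m) (Fin d) ℝ :=
  Matrix.of fun i j => A i j / slack A b x i

/-- The projection matrix `P_x = A_x (A_x^⊤ A_x)⁻¹ A_x^⊤` onto the column space of `A_x`. -/
def projMat {d m : ℕ} (A : Matrix (Fin m) (Fin d) ℝ) (b : Fin m → ℝ) (x : Fin d → ℝ) :
    Matrix (Fin m) (Fin m) ℝ :=
  Amat A b x * (logHess A b x)⁻¹ * (Amat A b x)ᵀ

/-- Entrywise (Hadamard) square of a matrix. -/
def hadSq {n : ℕ} (M : Matrix (Fin n) (Fin n) ℝ) : Matrix (Fin n) (Fin n) ℝ :=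
  Matrix.of fun i j => (M i j) ^ 2

/-- `κ = log₂(2m/d)`. -/
def kappaJ (d m : ℕ) : ℝ := Real.logb 2 ((2 * m : ℝ) / d)

/-- `α = 1 − 1/log₂(2m/d)`. -/
def alphaJ (d m : ℕ) : ℝ := 1 - 1 / Real.logb 2 ((2 * m : ℝ) / d)

/-- `β_J = d/(2m)`. -/
def betaJ (d m : ℕ) : ℝ := (d : ℝ) / (2 * m)

/-- The weighted projection matrix
`P_{x,w} = W^{α/2} A_x (A_x^⊤ W^α A_x)⁻¹ A_x^⊤ W^{α/2}`. -/
def johnProj {d m : ℕ} (A : Matrix (Fin m) (Fin d) ℝ) (b : Fin m → ℝ) (x : Fin d → ℝ)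
    (w : Fin m → ℝ) : Matrix (Fin m) (Fin m) ℝ :=
  Matrix.diagonal (fun i => w i ^ (alphaJ d m / 2)) * Amat A b x *
    ((Amat A b x)ᵀ * Matrix.diagonal (fun i => w i ^ alphaJ d m) * Amat A b x)⁻¹ *
    (Amat A b x)ᵀ * Matrix.diagonal (fun i => w i ^ (alphaJ d m / 2))

/-- `w` is a positive solution of the John fixed-point equations
`w_i = (P_{x,w})_{ii} + β_J` at `x`. -/
def IsJohnWeight {d m : ℕ} (A : Matrix (Fin m) (Fin d) ℝ) (b : Fin m → ℝ) (x : Fin d → ℝ)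
    (w : Fin m → ℝ) : Prop :=
  (∀ i, 0 < w i) ∧ ∀ i, w i = johnProj A b x w i i + betaJ d m

/-- The John matrix `J_x = Σ_i w_i a_i a_i^⊤ / s_{x,i}²` built from weights `w`. -/
def johnMat {d m : ℕ} (A : Matrix (Fin m) (Fin d) ℝ) (b : Fin m → ℝ) (x : Fin d → ℝ)
    (w : Fin m → ℝ) : Matrix (Fin d) (Fin d) ℝ :=
  ∑ i : Fin m, (w i / (slack A b x i) ^ 2) • vecMulVec (A i) (A i)


private lemma cs_psd {n : ℕ} (M : Matrix (Fin n) (Fin n) ℝ) (hsym : Mᵀ = M)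
    (hpos : ∀ z : Fin n → ℝ, 0 ≤ z ⬝ᵥ (M *ᵥ z)) (a c : Fin n → ℝ) :
    (a ⬝ᵥ (M *ᵥ c)) ^ 2 ≤ (a ⬝ᵥ (M *ᵥ a)) * (c ⬝ᵥ (M *ᵥ c)) := by
  have hsw : ∀ u v : Fin n → ℝ, u ⬝ᵥ (M *ᵥ v) = v ⬝ᵥ (M *ᵥ u) := by
    intro u v
    rw [Matrix.dotProduct_mulVec, ← Matrix.vecMul_transpose, hsym, dotProduct_comm]
  have key : ∀ t : ℝ, 0 ≤ (c ⬝ᵥ (M *ᵥ c)) * (t * t) + (2 * (a ⬝ᵥ (M *ᵥ c))) * t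
      + (a ⬝ᵥ (M *ᵥ a)) := by
    intro t
    have h := hpos (a + t • c)
    have expand : (a + t • c) ⬝ᵥ (M *ᵥ (a + t • c)) =
        (c ⬝ᵥ (M *ᵥ c)) * (t * t) + (2 * (a ⬝ᵥ (M *ᵥ c))) * t + (a ⬝ᵥ (M *ᵥ a)) := by
      simp only [Matrix.mulVec_add, Matrix.mulVec_smul, add_dotProduct, dotProduct_add,
        dotProduct_smul, smul_dotProduct, smul_eq_mul]
      rw [hsw c a]; ring
    linarith [expand ▸ h]
  have hd := discrim_le_zero key
  rw [discrim] at hd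
  nlinarith [hd]

private lemma quadform_diag_eq {d m : ℕ} (B : Matrix (Fin m) (Fin d) ℝ) (c : Fin m → ℝ)
    (z : Fin d → ℝ) :
    z ⬝ᵥ ((Bᵀ * Matrix.diagonal c * B) *ᵥ z) = ∑ k, c k * ((B *ᵥ z) k)^2 := by
  rw [← Matrix.mulVec_mulVec, ← Matrix.mulVec_mulVec, Matrix.dotProduct_mulVec,
    Matrix.vecMul_transpose]
  simp [dotProduct, Matrix.mulVec_diagonal]
  exact Finset.sum_congr rfl fun k _ => by ring

private lemma dbd_diag {d m : ℕ} (B : Matrix (Fin m) (Fin d) ℝ) (M : Matrix (Fin d) (Fin d) ℝ)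
    (e : Fin m → ℝ) (j : Fin m) :
    (Matrix.diagonal e * B * M * Bᵀ * Matrix.diagonal e) j j
      = e j * e j * (B j ⬝ᵥ (M *ᵥ B j)) := by
  have h3 : (B * M * Bᵀ) j j = B j ⬝ᵥ (M *ᵥ B j) := by
    simp only [Matrix.mul_apply, Matrix.transpose_apply, dotProduct, Matrix.mulVec,
      Finset.sum_mul, Finset.mul_sum]
    rw [Finset.sum_comm]
    exact Finset.sum_congr rfl fun k _ => Finset.sum_congr rfl fun l _ => by ring
  have h0 : Matrix.diagonal e * B * M * Bᵀ * Matrix.diagonal e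
      = Matrix.diagonal e * (B * M * Bᵀ) * Matrix.diagonal e := by
    simp only [Matrix.mul_assoc]
  rw [h0, Matrix.mul_diagonal, Matrix.diagonal_mul, h3]
  ring

private lemma sum_smul_vecMulVec_quad {d m : ℕ} (a : Fin m → Fin d → ℝ) (c : Fin m → ℝ)
    (v : Fin d → ℝ) :
    v ⬝ᵥ ((∑ i, c i • vecMulVec (a i) (a i)) *ᵥ v) = ∑ i, c i * (a i ⬝ᵥ v)^2 := by
  have h2 : (∑ i, c i • vecMulVec (a i) (a i)) *ᵥ v = ∑ i, (c i * (a i ⬝ᵥ v)) • a i := by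
    funext j
    simp only [Matrix.mulVec, dotProduct, Matrix.sum_apply, Matrix.smul_apply,
      vecMulVec_apply, smul_eq_mul, Finset.sum_apply, Pi.smul_apply, Finset.sum_mul,
      Finset.mul_sum]
    rw [Finset.sum_comm]
    exact Finset.sum_congr rfl fun i _ => Finset.sum_congr rfl fun l _ => by ring
  rw [h2]
  simp only [dotProduct, Finset.sum_apply, Pi.smul_apply, smul_eq_mul, Finset.mul_sum,
    pow_two, Finset.sum_mul]
  rw [Finset.sum_comm]
  exact Finset.sum_congr rfl fun i _ => Finset.sum_congr rfl fun j _ =>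
    Finset.sum_congr rfl fun l _ => by ring

private lemma mulVec_eq_zero_of_rank {d m : ℕ} (A : Matrix (Fin m) (Fin d) ℝ)
    (hrank : A.rank = d) (z : Fin d → ℝ) (hz : A *ᵥ z = 0) : z = 0 := by
  have h1 := LinearMap.finrank_range_add_finrank_ker A.mulVecLin
  rw [Matrix.rank] at hrank
  have h2 : Module.finrank ℝ (Fin d → ℝ) = d := by simp
  rw [h2, hrank] at h1
  have hker : Module.finrank ℝ (LinearMap.ker A.mulVecLin) = 0 := by omega
  have hbot : LinearMap.ker A.mulVecLin = ⊥ := Submodule.finrank_eq_zero.mp hker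
  have hmem : z ∈ LinearMap.ker A.mulVecLin := by
    rw [LinearMap.mem_ker, Matrix.mulVecLin_apply]; exact hz
  rw [hbot] at hmem
  simpa using hmem

private lemma rpow_base_self_eq_two {c : ℝ} (hc0 : 0 < c) (hL0 : Real.logb 2 c ≠ 0) :
    c ^ ((1:ℝ) / Real.logb 2 c) = 2 := by
  nth_rewrite 1 [← Real.rpow_logb two_pos (by norm_num) hc0]
  rw [← Real.rpow_mul (by norm_num : (0:ℝ) ≤ 2), mul_one_div, div_self hL0, Real.rpow_one]


set_option maxHeartbeats 1000000 in
/-- Slackness varies slowly in the John local norm: if `w` is a positive solution of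
the John fixed-point equations at `x`, then
`max_i |1 − s_{y,i}/s_{x,i}| ≤ 2‖x−y‖_{J_x}`. -/
theorem john_slackness_slowly_varying (d m : ℕ) (hd : 0 < d) (hdm : d ≤ m)
    (A : Matrix (Fin m) (Fin d) ℝ) (b : Fin m → ℝ) (hrank : A.rank = d)
    (x y : Fin d → ℝ) (hx : x ∈ interiorPoly A b) (hy : y ∈ interiorPoly A b)
    (w : Fin m → ℝ) (hw : IsJohnWeight A b x w) :
    ∀ i, |1 - slack A b y i / slack A b x i| ≤
      2 * Real.sqrt ((x - y) ⬝ᵥ (johnMat A b x w *ᵥ (x - y))) := by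
  obtain ⟨hwpos, hweq⟩ := hw
  have hsx : ∀ k, 0 < slack A b x k := hx
  have hd0 : (0:ℝ) < d := by exact_mod_cast hd
  have hdm' : (d:ℝ) ≤ m := by exact_mod_cast hdm
  have hm0 : (0:ℝ) < m := lt_of_lt_of_le hd0 hdm'
  set α : ℝ := alphaJ d m with hαdef
  have hκ : 1 ≤ Real.logb 2 ((2 * m : ℝ) / d) := by
    have h2 : (2:ℝ) ≤ (2 * m : ℝ) / d := by rw [le_div_iff₀ hd0]; nlinarith
    rw [Real.le_logb_iff_rpow_le (by norm_num) (by linarith), Real.rpow_one]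
    exact h2
  have hα0 : 0 ≤ α := by
    rw [hαdef, alphaJ]
    have h1 : 1 / Real.logb 2 ((2 * m : ℝ) / d) ≤ 1 := by
      rw [div_le_one (by linarith)]; exact hκ
    linarith
  have hα1 : α ≤ 1 := by
    rw [hαdef, alphaJ]
    have h1 : 0 ≤ 1 / Real.logb 2 ((2 * m : ℝ) / d) := by positivity
    linarith
  have hβpos : 0 < betaJ d m := by rw [betaJ]; positivity
  have hβhalf : betaJ d m ^ (1 - α) = 1/2 := by
    have hc0 : (0:ℝ) < (2 * m : ℝ) / d := by positivity
    have hL0 : Real.logb 2 ((2 * m : ℝ) / d) ≠ 0 := by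
      intro h; rw [h] at hκ; norm_num at hκ
    have he : 1 - α = 1 / Real.logb 2 ((2 * m : ℝ) / d) := by rw [hαdef, alphaJ]; ring
    have hβc : betaJ d m = ((2 * m : ℝ) / d)⁻¹ := by rw [betaJ, inv_div]
    rw [he, hβc, Real.inv_rpow hc0.le, rpow_base_self_eq_two hc0 hL0]
    norm_num
  set B : Matrix (Fin m) (Fin d) ℝ := Amat A b x with hBdef
  set G : Matrix (Fin d) (Fin d) ℝ := Bᵀ * Matrix.diagonal (fun i => w i ^ α) * B with hGdef
  set v : Fin d → ℝ := x - y with hvdef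
  have hBmul : ∀ (z : Fin d → ℝ) (k : Fin m), (B *ᵥ z) k = (A *ᵥ z) k / slack A b x k := by
    intro z k
    rw [hBdef]
    simp only [Amat, Matrix.mulVec, dotProduct, Matrix.of_apply, div_mul_eq_mul_div]
    rw [← Finset.sum_div]
  have hBinj : ∀ z : Fin d → ℝ, z ≠ 0 → B *ᵥ z ≠ 0 := by
    intro z hz hBz
    refine hz (mulVec_eq_zero_of_rank A hrank z ?_)
    funext k
    have h0 : (A *ᵥ z) k / slack A b x k = 0 := by
      rw [← hBmul z k, hBz]; rfl
    have := (div_eq_zero_iff.mp h0).resolve_right (hsx k).ne'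
    simpa using this
  have hGsym : Gᵀ = G := by
    rw [hGdef]
    simp [Matrix.transpose_mul, Matrix.mul_assoc]
  have hGherm : G.IsHermitian := by
    show Gᴴ = G
    rw [Matrix.conjTranspose_eq_transpose_of_trivial]; exact hGsym
  have hGpd : G.PosDef := by
    refine Matrix.PosDef.of_dotProduct_mulVec_pos hGherm fun z hz => ?_
    rw [star_trivial, hGdef, quadform_diag_eq]
    obtain ⟨k, hk⟩ := Function.ne_iff.mp (hBinj z hz)
    refine Finset.sum_pos' (fun l _ =>
      mul_nonneg (Real.rpow_nonneg (hwpos l).le α) (sq_nonneg _))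
      ⟨k, Finset.mem_univ k, ?_⟩
    have hk' : (B *ᵥ z) k ≠ 0 := by simpa using hk
    exact mul_pos (Real.rpow_pos_of_pos (hwpos k) α) (by positivity)
  have hGdet : IsUnit G.det := (Matrix.isUnit_iff_isUnit_det G).mp hGpd.isUnit
  have hGinvpd : G⁻¹.PosDef := hGpd.inv
  have hGinvsym : G⁻¹ᵀ = G⁻¹ := by
    have h := hGinvpd.1
    rwa [Matrix.IsHermitian, Matrix.conjTranspose_eq_transpose_of_trivial] at h
  have hGinvpos : ∀ z : Fin d → ℝ, 0 ≤ z ⬝ᵥ (G⁻¹ *ᵥ z) := by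
    intro z
    have := hGinvpd.posSemidef.dotProduct_mulVec_nonneg z
    simpa using this
  set q : Fin m → ℝ := fun j => B j ⬝ᵥ (G⁻¹ *ᵥ B j) with hqdef
  have hq0 : ∀ j, 0 ≤ q j := fun j => by rw [hqdef]; exact hGinvpos (B j)
  have hproj : ∀ j, johnProj A b x w j j = w j ^ α * q j := by
    intro j
    simp only [johnProj]
    rw [← hαdef, ← hBdef, ← hGdef, dbd_diag, ← Real.rpow_add (hwpos j), add_halves, hqdef]
  have hwβ : ∀ j, betaJ d m ≤ w j := by
    intro j
    have h := hweq j
    rw [hproj j] at h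
    nlinarith [hq0 j, Real.rpow_nonneg (hwpos j).le α]
  have hwα2w : ∀ j, w j ^ α ≤ 2 * w j := by
    intro j
    have h1 : (1:ℝ)/2 ≤ w j ^ (1 - α) := by
      rw [← hβhalf]
      exact Real.rpow_le_rpow hβpos.le (hwβ j) (by linarith)
    have h2 : w j ^ α * w j ^ (1 - α) = w j := by
      rw [← Real.rpow_add (hwpos j)]; norm_num
    have h3 : 0 < w j ^ α := Real.rpow_pos_of_pos (hwpos j) α
    nlinarith [mul_le_mul_of_nonneg_left h1 h3.le]
  intro i
  have hAv : (A *ᵥ v) i = slack A b y i - slack A b x i := by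
    rw [hvdef]
    simp only [Matrix.mulVec_sub, Pi.sub_apply, slack]
    ring
  have hlhs : 1 - slack A b y i / slack A b x i = -((B *ᵥ v) i) := by
    have hsne := (hsx i).ne'
    rw [hBmul v i, hAv]
    field_simp
    ring
  have hGv : v ⬝ᵥ (G *ᵥ v) = ∑ k, w k ^ α * ((B *ᵥ v) k)^2 := by
    rw [hGdef, quadform_diag_eq]
  have hJv : v ⬝ᵥ (johnMat A b x w *ᵥ v) = ∑ k, w k * ((B *ᵥ v) k)^2 := by
    rw [johnMat, sum_smul_vecMulVec_quad (a := A)]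
    refine Finset.sum_congr rfl fun k _ => ?_
    rw [hBmul v k]
    have hAk : A k ⬝ᵥ v = (A *ᵥ v) k := rfl
    have hsk := (hsx k).ne'
    rw [hAk, div_pow]
    field_simp
  have hJ0 : 0 ≤ v ⬝ᵥ (johnMat A b x w *ᵥ v) := by
    rw [hJv]
    exact Finset.sum_nonneg fun k _ => mul_nonneg (hwpos k).le (sq_nonneg _)
  have hGv0 : 0 ≤ v ⬝ᵥ (G *ᵥ v) := by
    rw [hGv]
    exact Finset.sum_nonneg fun k _ =>
      mul_nonneg (Real.rpow_nonneg (hwpos k).le α) (sq_nonneg _)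
  have hGGi : G * G⁻¹ = 1 := Matrix.mul_nonsing_inv G hGdet
  have hGiG : G⁻¹ * G = 1 := Matrix.nonsing_inv_mul G hGdet
  have hkey : w i ^ α * q i ^ 2 ≤ q i := by
    have hzq : (B *ᵥ (G⁻¹ *ᵥ B i)) i = q i := by rw [hqdef]; rfl
    have hzGz : (G⁻¹ *ᵥ B i) ⬝ᵥ (G *ᵥ (G⁻¹ *ᵥ B i)) = q i := by
      rw [Matrix.mulVec_mulVec, hGGi, Matrix.one_mulVec, dotProduct_comm, hqdef]
    have h1 : (G⁻¹ *ᵥ B i) ⬝ᵥ (G *ᵥ (G⁻¹ *ᵥ B i))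
        = ∑ k, w k ^ α * ((B *ᵥ (G⁻¹ *ᵥ B i)) k)^2 := by
      rw [hGdef, quadform_diag_eq]
    have h2 : w i ^ α * ((B *ᵥ (G⁻¹ *ᵥ B i)) i)^2
        ≤ ∑ k, w k ^ α * ((B *ᵥ (G⁻¹ *ᵥ B i)) k)^2 :=
      Finset.single_le_sum (fun k _ =>
        mul_nonneg (Real.rpow_nonneg (hwpos k).le α) (sq_nonneg _)) (Finset.mem_univ i)
    rw [hzq, ← h1, hzGz] at h2
    exact h2
  have hqle1 : q i ≤ 1 := by
    have heq := hweq i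
    rw [hproj i] at heq
    have hwαpos : 0 < w i ^ α := Real.rpow_pos_of_pos (hwpos i) α
    rcases le_or_gt (w i) 1 with h1 | h1
    · have hwα : w i ≤ w i ^ α := by
        nth_rewrite 1 [← Real.rpow_one (w i)]
        exact Real.rpow_le_rpow_of_exponent_ge (hwpos i) h1 hα1
      nlinarith
    · have hge1 : 1 ≤ w i ^ α := Real.one_le_rpow h1.le hα0
      nlinarith [hkey, hq0 i, mul_nonneg (sub_nonneg.mpr hge1) (sq_nonneg (q i))]
  have hCS : ((B *ᵥ v) i) ^ 2 ≤ q i * (v ⬝ᵥ (G *ᵥ v)) := by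
    have h1 : (B *ᵥ v) i = B i ⬝ᵥ (G⁻¹ *ᵥ (G *ᵥ v)) := by
      rw [Matrix.mulVec_mulVec, hGiG, Matrix.one_mulVec]
      rfl
    have h2 := cs_psd G⁻¹ hGinvsym hGinvpos (B i) (G *ᵥ v)
    have h3 : (G *ᵥ v) ⬝ᵥ (G⁻¹ *ᵥ (G *ᵥ v)) = v ⬝ᵥ (G *ᵥ v) := by
      rw [Matrix.mulVec_mulVec, hGiG, Matrix.one_mulVec, dotProduct_comm]
    rw [h3] at h2
    rw [h1, hqdef]
    exact h2
  have hGle : v ⬝ᵥ (G *ᵥ v) ≤ 2 * (v ⬝ᵥ (johnMat A b x w *ᵥ v)) := by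
    rw [hGv, hJv, Finset.mul_sum]
    refine Finset.sum_le_sum fun k _ => ?_
    nlinarith [hwα2w k, sq_nonneg ((B *ᵥ v) k)]
  have hfin : ((B *ᵥ v) i)^2 ≤ 4 * (v ⬝ᵥ (johnMat A b x w *ᵥ v)) := by
    calc ((B *ᵥ v) i)^2 ≤ q i * (v ⬝ᵥ (G *ᵥ v)) := hCS
    _ ≤ 1 * (v ⬝ᵥ (G *ᵥ v)) := mul_le_mul_of_nonneg_right hqle1 hGv0
    _ = v ⬝ᵥ (G *ᵥ v) := one_mul _
    _ ≤ 2 * (v ⬝ᵥ (johnMat A b x w *ᵥ v)) := hGle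
    _ ≤ 4 * (v ⬝ᵥ (johnMat A b x w *ᵥ v)) := by linarith
  rw [hlhs, abs_neg, ← Real.sqrt_sq_eq_abs]
  have h4 : (4:ℝ) * (v ⬝ᵥ (johnMat A b x w *ᵥ v))
      = (2 * Real.sqrt (v ⬝ᵥ (johnMat A b x w *ᵥ v)))^2 := by
    rw [mul_pow, Real.sq_sqrt hJ0]; norm_num
  calc Real.sqrt (((B *ᵥ v) i)^2)
      ≤ Real.sqrt ((2 * Real.sqrt (v ⬝ᵥ (johnMat A b x w *ᵥ v)))^2) :=
        Real.sqrt_le_sqrt (by rw [← h4]; exact hfin)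
  _ = |2 * Real.sqrt (v ⬝ᵥ (johnMat A b x w *ᵥ v))| := Real.sqrt_sq_eq_abs _
  _ = 2 * Real.sqrt (v ⬝ᵥ (johnMat A b x w *ᵥ v)) := abs_of_nonneg (by positivity)


end PolytopeWalks
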